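/- The trace on the qubit subalgebra is independent of the reference state: let ψ ∈ H be a unit vector supported on the even integers (ψ(ℓ) = 0 for all odd ℓ, ‖ψ‖ = 1), and let ψ⊥ ∈ H be the vector defined by ψ⊥(ℓ) = ψ(ℓ+1) for all ℓ ∈ ℤ (so ψ⊥ is a unit vector supported on the odd integers). Then a₃ ψ = ψ, and for all complex numbers c₀, c₁, c₂, c₃, setting a := c₀•1 + c₁•a₁ + c₂•a₂ + c₃•a₃, one has ⟪ψ, a ψ⟫ + ⟪ψ⊥, a ψ⊥⟫ = 2·c₀; in particular the resulting trace satisfies Tr_ψ(1) = 2 and Tr_ψ(aᵢ) = 0 for i = 1,2,3, independently of the choice of ψ. -/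

import Mathlib

open Complex

noncomputable section

/-- The Hilbert space `H := ℓ²(ℤ, ℂ)`. -/
abbrev H : Type := lp (fun _ : ℤ => ℂ) 2

/-- The orthonormal basis vectors `e ℓ = lp.single 2 ℓ 1`. -/
def e (ℓ : ℤ) : H := lp.single 2 ℓ 1

/-- `a₃ := U(π)`. -/
def a₃ (U : ℝ → (H →L[ℂ] H)) : H →L[ℂ] H := U Real.pi

/-- `a₊ := (1/2) • ((1 − U(π)) ∘ V*)`. -/
def aPlus (U : ℝ → (H →L[ℂ] H)) (V : unitary (H →L[ℂ] H)) : H →L[ℂ] H :=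
  ((1 : ℂ) / 2) • ((1 - U Real.pi) ∘L star (V : H →L[ℂ] H))

/-- `a₋ := (1/2) • ((1 + U(π)) ∘ V)`. -/
def aMinus (U : ℝ → (H →L[ℂ] H)) (V : unitary (H →L[ℂ] H)) : H →L[ℂ] H :=
  ((1 : ℂ) / 2) • ((1 + U Real.pi) ∘L (V : H →L[ℂ] H))

/-- `a₁ := a₊ + a₋`. -/
def a₁ (U : ℝ → (H →L[ℂ] H)) (V : unitary (H →L[ℂ] H)) : H →L[ℂ] H :=
  aPlus U V + aMinus U V

/-- `a₂ := −i•a₊ + i•a₋`. -/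
def a₂ (U : ℝ → (H →L[ℂ] H)) (V : unitary (H →L[ℂ] H)) : H →L[ℂ] H :=
  (-Complex.I) • aPlus U V + Complex.I • aMinus U V


lemma exp_I_int_pi (ℓ : ℤ) : Complex.exp (Complex.I * ℓ * Real.pi) = (-1:ℂ)^ℓ := by
  rw [show (Complex.I * ℓ * Real.pi) = (ℓ : ℤ) * (Real.pi * Complex.I) by ring,
    Complex.exp_int_mul, Complex.exp_pi_mul_I]

lemma single_eq (i : ℤ) (c : ℂ) : lp.single 2 i c = c • e i := by
  rw [e, ← lp.single_smul]; norm_num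

lemma apply_eq_of_forall_single (A : H →L[ℂ] H) (x y : H)
    (h : ∀ ℓ : ℤ, A (lp.single 2 ℓ (x ℓ)) = lp.single 2 ℓ (y ℓ)) : A x = y := by
  have h2 := (lp.hasSum_single (by norm_num) x).mapL A
  rw [funext h] at h2
  exact h2.unique (lp.hasSum_single (by norm_num) y)

lemma apply_eq_zero_of_forall_single (A : H →L[ℂ] H) (x : H)
    (h : ∀ ℓ : ℤ, A (lp.single 2 ℓ (x ℓ)) = 0) : A x = 0 := by
  have h2 := (lp.hasSum_single (by norm_num) x).mapL A
  rw [funext h] at h2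
  exact h2.unique hasSum_zero

/-- **The trace on the qubit subalgebra is independent of the reference state:** for
any unit vector `ψ` supported on the even integers, with `ψ⊥ (ℓ) = ψ (ℓ+1)`, one has
`a₃ ψ = ψ`, and for `a = c₀•1 + c₁•a₁ + c₂•a₂ + c₃•a₃`,
`⟪ψ, a ψ⟫ + ⟪ψ⊥, a ψ⊥⟫ = 2·c₀`; in particular `Tr_ψ(1) = 2` and `Tr_ψ(aᵢ) = 0`. -/
theorem qubit_trace_reference_state_independent
    (U : ℝ → (H →L[ℂ] H)) (V : unitary (H →L[ℂ] H))
    (hU : ∀ (θ : ℝ) (ℓ : ℤ), U θ (e ℓ) = Complex.exp (Complex.I * ℓ * θ) • e ℓ)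
    (hV : ∀ ℓ : ℤ, (V : H →L[ℂ] H) (e ℓ) = e (ℓ + 1))
    (ψ : H) (hψnorm : ‖ψ‖ = 1) (hψeven : ∀ ℓ : ℤ, Odd ℓ → ψ ℓ = 0)
    (ψp : H) (hψp : ∀ ℓ : ℤ, ψp ℓ = ψ (ℓ + 1)) :
    a₃ U ψ = ψ ∧
    ∀ c₀ c₁ c₂ c₃ : ℂ,
      (inner ℂ ψ ((c₀ • (1 : H →L[ℂ] H) + c₁ • a₁ U V + c₂ • a₂ U V + c₃ • a₃ U) ψ) : ℂ) +
        (inner ℂ ψp ((c₀ • (1 : H →L[ℂ] H) + c₁ • a₁ U V + c₂ • a₂ U V + c₃ • a₃ U) ψp) : ℂ)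
        = 2 * c₀ := by
  have hUe : ∀ ℓ : ℤ, U Real.pi (e ℓ) = ((-1:ℂ)^ℓ) • e ℓ := fun ℓ => by
    rw [hU, exp_I_int_pi]
  have hψp_odd : ∀ ℓ : ℤ, Even ℓ → ψp ℓ = 0 := fun ℓ h => by
    rw [hψp]; exact hψeven _ h.add_one
  -- U π ψ = ψ
  have hUψ : U Real.pi ψ = ψ := by
    refine apply_eq_of_forall_single _ _ _ fun ℓ => ?_
    rcases Int.even_or_odd ℓ with h | h
    · rw [single_eq, map_smul, hUe, h.neg_one_zpow, one_smul]
    · simp [hψeven ℓ h, single_eq]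
  -- U π ψp = -ψp
  have hUψp : U Real.pi ψp = -ψp := by
    refine apply_eq_of_forall_single _ _ _ fun ℓ => ?_
    rcases Int.even_or_odd ℓ with h | h
    · simp [hψp_odd ℓ h, single_eq, lp.coeFn_neg]
    · rw [single_eq, map_smul, hUe, h.neg_one_zpow, lp.coeFn_neg, Pi.neg_apply, single_eq]
      module
  -- V ψp = ψ
  have hVψp : (V : H →L[ℂ] H) ψp = ψ := by
    have h2 := (lp.hasSum_single (by norm_num) ψp).mapL (V : H →L[ℂ] H)
    have h3 : ∀ ℓ : ℤ, (V : H →L[ℂ] H) (lp.single 2 ℓ (ψp ℓ)) = lp.single 2 (ℓ+1) (ψ (ℓ+1)) := by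
      intro ℓ
      rw [single_eq, map_smul, hV, ← single_eq, hψp]
    rw [funext h3] at h2
    have h4 : HasSum (fun m : ℤ => lp.single 2 m (ψ m)) ((V : H →L[ℂ] H) ψp) :=
      ((Equiv.addRight (1:ℤ)).hasSum_iff).mp h2
    exact h4.unique (lp.hasSum_single (by norm_num) ψ)
  have hstarVe : ∀ ℓ : ℤ, star (V : H →L[ℂ] H) (e ℓ) = e (ℓ - 1) := by
    intro ℓ
    have h := hV (ℓ - 1)
    rw [sub_add_cancel] at h
    rw [← h, ← ContinuousLinearMap.mul_apply, (Unitary.mem_iff.mp V.2).1,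
      ContinuousLinearMap.one_apply]
  have hstarVψ : star (V : H →L[ℂ] H) ψ = ψp := by
    rw [← hVψp, ← ContinuousLinearMap.mul_apply, (Unitary.mem_iff.mp V.2).1,
      ContinuousLinearMap.one_apply]
  -- (1 + Uπ) (V ψ) = 0
  have hz1 : ((1 + U Real.pi) ∘L (V : H →L[ℂ] H)) ψ = 0 := by
    refine apply_eq_zero_of_forall_single _ _ fun ℓ => ?_
    rcases Int.even_or_odd ℓ with h | h
    · rw [single_eq, ContinuousLinearMap.comp_apply, map_smul, hV, map_smul,
        ContinuousLinearMap.add_apply, ContinuousLinearMap.one_apply, hUe,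
        (h.add_one).neg_one_zpow]
      module
    · simp [hψeven ℓ h, single_eq]
  -- (1 - Uπ) (star V ψp) = 0
  have hz2 : ((1 - U Real.pi) ∘L star (V : H →L[ℂ] H)) ψp = 0 := by
    refine apply_eq_zero_of_forall_single _ _ fun ℓ => ?_
    rcases Int.even_or_odd ℓ with h | h
    · simp [hψp_odd ℓ h, single_eq]
    · rw [single_eq, ContinuousLinearMap.comp_apply, map_smul, hstarVe, map_smul,
        ContinuousLinearMap.sub_apply, ContinuousLinearMap.one_apply, hUe,
        (h.sub_odd odd_one).neg_one_zpow]
      module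
  -- the four operators on ψ and ψp
  have haPψ : aPlus U V ψ = ψp := by
    rw [aPlus, ContinuousLinearMap.smul_apply, ContinuousLinearMap.comp_apply, hstarVψ,
      ContinuousLinearMap.sub_apply, ContinuousLinearMap.one_apply, hUψp]
    module
  have haMψ : aMinus U V ψ = 0 := by
    rw [aMinus, ContinuousLinearMap.smul_apply, hz1, smul_zero]
  have haPψp : aPlus U V ψp = 0 := by
    rw [aPlus, ContinuousLinearMap.smul_apply, hz2, smul_zero]
  have haMψp : aMinus U V ψp = ψ := by
    rw [aMinus, ContinuousLinearMap.smul_apply, ContinuousLinearMap.comp_apply, hVψp,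
      ContinuousLinearMap.add_apply, ContinuousLinearMap.one_apply, hUψ]
    module
  -- inner products
  have hiψψ : (inner ℂ ψ ψ : ℂ) = 1 := by
    rw [@inner_self_eq_norm_sq_to_K ℂ, hψnorm]; norm_num
  have hiψψp : (inner ℂ ψ ψp : ℂ) = 0 := by
    rw [lp.inner_eq_tsum]
    calc (∑' i, (inner ℂ (ψ i) (ψp i) : ℂ)) = ∑' (_ : ℤ), (0:ℂ) := by
          refine tsum_congr fun i => ?_
          rcases Int.even_or_odd i with h | h
          · rw [hψp_odd i h, inner_zero_right]
          · rw [hψeven i h, inner_zero_left]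
      _ = 0 := tsum_zero
  have hiψpψ : (inner ℂ ψp ψ : ℂ) = 0 := by
    rw [← inner_conj_symm, hiψψp, map_zero]
  have hiψpψp : (inner ℂ ψp ψp : ℂ) = 1 := by
    have h := ContinuousLinearMap.adjoint_inner_left (V : H →L[ℂ] H) ψp ((V : H →L[ℂ] H) ψp)
    rw [← ContinuousLinearMap.star_eq_adjoint, ← ContinuousLinearMap.mul_apply,
      (Unitary.mem_iff.mp V.2).1, ContinuousLinearMap.one_apply, hVψp, hiψψ] at h
    exact h
  refine ⟨hUψ, fun c₀ c₁ c₂ c₃ => ?_⟩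
  have e1 : (c₀ • (1 : H →L[ℂ] H) + c₁ • a₁ U V + c₂ • a₂ U V + c₃ • a₃ U) ψ
      = c₀ • ψ + c₁ • ψp + c₂ • ((-Complex.I) • ψp) + c₃ • ψ := by
    simp only [a₁, a₂, a₃, ContinuousLinearMap.add_apply, ContinuousLinearMap.smul_apply,
      ContinuousLinearMap.one_apply, haPψ, haMψ, hUψ, smul_zero, add_zero]
  have e2 : (c₀ • (1 : H →L[ℂ] H) + c₁ • a₁ U V + c₂ • a₂ U V + c₃ • a₃ U) ψp
      = c₀ • ψp + c₁ • ψ + c₂ • (Complex.I • ψ) + c₃ • (-ψp) := by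
    simp only [a₁, a₂, a₃, ContinuousLinearMap.add_apply, ContinuousLinearMap.smul_apply,
      ContinuousLinearMap.one_apply, haPψp, haMψp, hUψp, smul_zero, zero_add]
  rw [e1, e2]
  simp only [inner_add_right, inner_smul_right, hiψψ, hiψψp, hiψpψ, hiψpψp, inner_neg_right]
  ring
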